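/- Let G₆ be the subgroup of G₇ generated by s and u, let Z₆ = {1, z³, z⁶, z⁹}, U = {1, u, u²}, and X₆ = {1, s, s·u, s·u·s}. Then the map Z₆ × U × X₆ → G₆ sending (y, v, x) to y·v·x is a bijection onto G₆; in particular every element of G₆ is uniquely expressible as y·v·x with y ∈ Z₆, v ∈ U, x ∈ X₆. -/
import Mathlib


open Pointwise

namespace Tetra

def rels : Set (FreeGroup (Fin 3)) :=
  { FreeGroup.of 0 ^ 2, FreeGroup.of 1 ^ 3, FreeGroup.of 2 ^ 3,
    FreeGroup.of 0 * FreeGroup.of 1 * FreeGroup.of 2 *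
      (FreeGroup.of 1 * FreeGroup.of 2 * FreeGroup.of 0)⁻¹,
    FreeGroup.of 0 * FreeGroup.of 1 * FreeGroup.of 2 *
      (FreeGroup.of 2 * FreeGroup.of 0 * FreeGroup.of 1)⁻¹ }

/-- The group `G₇ = ⟨s, t, u | s² = t³ = u³ = 1, stu = tus = ust⟩`. -/
abbrev G7 := PresentedGroup rels

def s : G7 := PresentedGroup.of 0
def t : G7 := PresentedGroup.of 1
def u : G7 := PresentedGroup.of 2
def z : G7 := s * t * u

def G6 : Subgroup G7 := Subgroup.closure {s, u}

lemma relOne {r : FreeGroup (Fin 3)} (h : r ∈ rels) : PresentedGroup.mk rels r = 1 :=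
  (QuotientGroup.eq_one_iff r).mpr (Subgroup.subset_normalClosure h)

lemma hs2p : s ^ 2 = 1 := by
  have h := relOne (show FreeGroup.of 0 ^ 2 ∈ rels from Set.mem_insert _ _)
  rw [map_pow] at h; exact h

lemma ht3p : t ^ 3 = 1 := by
  have h := relOne (show FreeGroup.of 1 ^ 3 ∈ rels from
    Set.mem_insert_of_mem _ (Set.mem_insert _ _))
  rw [map_pow] at h; exact h

lemma hu3p : u ^ 3 = 1 := by
  have h := relOne (show FreeGroup.of 2 ^ 3 ∈ rels from
    Set.mem_insert_of_mem _ (Set.mem_insert_of_mem _ (Set.mem_insert _ _)))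
  rw [map_pow] at h; exact h

lemma hs2 : s * s = 1 := by rw [← hs2p, pow_two]
lemma ht3 : t * (t * t) = 1 := by rw [← ht3p, pow_succ, pow_two, mul_assoc]
lemma hu3 : u * (u * u) = 1 := by rw [← hu3p, pow_succ, pow_two, mul_assoc]

lemma hrel1 : s * t * u = t * u * s := by
  have h := relOne (show FreeGroup.of 0 * FreeGroup.of 1 * FreeGroup.of 2 *
      (FreeGroup.of 1 * FreeGroup.of 2 * FreeGroup.of 0)⁻¹ ∈ rels from
    Set.mem_insert_of_mem _ (Set.mem_insert_of_mem _ (Set.mem_insert_of_mem _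
      (Set.mem_insert _ _))))
  rw [map_mul, map_inv, map_mul, map_mul, map_mul, map_mul] at h
  exact mul_inv_eq_one.mp h

lemma hrel2 : s * t * u = u * s * t := by
  have h := relOne (show FreeGroup.of 0 * FreeGroup.of 1 * FreeGroup.of 2 *
      (FreeGroup.of 2 * FreeGroup.of 0 * FreeGroup.of 1)⁻¹ ∈ rels from
    Set.mem_insert_of_mem _ (Set.mem_insert_of_mem _ (Set.mem_insert_of_mem _
      (Set.mem_insert_of_mem _ rfl))))
  rw [map_mul, map_inv, map_mul, map_mul, map_mul, map_mul] at h
  exact mul_inv_eq_one.mp h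

lemma hzs : z * s = s * z := by
  calc z * s = (s * t * u) * s := rfl
    _ = s * (t * u * s) := by group
    _ = s * z := by rw [z, hrel1]

lemma hzu : z * u = u * z := by
  calc z * u = (s * t * u) * u := rfl
    _ = (u * s * t) * u := by rw [hrel2]
    _ = u * z := by rw [z]; group

lemma hzt : z * t = t * z := by
  calc z * t = (t * u * s) * t := by rw [z, hrel1]
    _ = t * (u * s * t) := by group
    _ = t * z := by rw [z, hrel2]

lemma czs : Commute z s := hzs
lemma czu : Commute z u := hzu
lemma czt : Commute z t := hzt

lemma hus : u * s = t * t * z := by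
  have h : t * (u * s) = z := by rw [z, hrel1]; group
  have h2 : t * (t * (t * (u * s))) = t * (t * z) := by rw [h]
  rw [show t * (t * (t * (u * s))) = (t * (t * t)) * (u * s) by group, ht3, one_mul] at h2
  rw [h2]; group

lemma hK : (u * s) ^ 3 = z ^ 3 := by
  have c1 : Commute (t * t) z := (czt.symm).mul_left (czt.symm)
  rw [hus, c1.mul_pow, show (t * t) ^ 3 = (t ^ 3) ^ 2 by rw [← pow_two, ← pow_mul, ← pow_mul], ht3p, one_pow, one_mul]

lemma hsu : (s * u) ^ 3 = z ^ 3 := by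
  have h : (s * u) ^ 3 * s = s * (u * s) ^ 3 := by
    simp only [pow_succ, pow_zero, one_mul, mul_assoc]
  have c : Commute s (z ^ 3) := czs.symm.pow_right 3
  have h2 : (s * u) ^ 3 * (s * s) = s * (u * s) ^ 3 * s := by
    rw [← mul_assoc, h]
  rw [hs2, mul_one, hK] at h2
  rw [h2, c.eq, mul_assoc, hs2, mul_one]

-- Part 2 : z^12 = 1
lemma e1 : (u * s) ^ 3 * (s * u) = u * ((s * u) ^ 2 * ((s * s) * u)) := by
  simp only [pow_succ, pow_zero, one_mul, mul_assoc]

lemma h4 : (s * u) ^ 4 = u * ((s * u) ^ 2 * u) := by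
  have e1' := e1
  rw [hs2, one_mul] at e1'
  calc (s * u) ^ 4 = (s * u) ^ 3 * (s * u) := by rw [← pow_succ]
    _ = z ^ 3 * (s * u) := by rw [hsu]
    _ = (u * s) ^ 3 * (s * u) := by rw [hK]
    _ = u * ((s * u) ^ 2 * u) := e1'

lemma hg2 : ((s * u) ^ 2 * u) * ((s * u) ^ 2 * u) = z ^ 6 := by
  calc ((s * u) ^ 2 * u) * ((s * u) ^ 2 * u)
      = (s * u) ^ 2 * (u * ((s * u) ^ 2 * u)) := by simp only [mul_assoc]
    _ = (s * u) ^ 2 * (s * u) ^ 4 := by rw [← h4]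
    _ = (s * u) ^ 6 := by rw [← pow_add]
    _ = ((s * u) ^ 3) ^ 2 := by rw [← pow_mul]
    _ = (z ^ 3) ^ 2 := by rw [hsu]
    _ = z ^ 6 := by rw [← pow_mul]

lemma hginv : ((s * u) ^ 2 * u) * (s * (((s * u) ^ 2 * u) * s)) = 1 := by
  have step1 : ((s * u) ^ 2 * u) * (s * (((s * u) ^ 2 * u) * s))
      = s * (u * (s * (u * (u * ((s * s) * (u * (s * (u * (u * s)))))))))  := by
    simp only [pow_succ, pow_zero, one_mul, mul_assoc]
  rw [step1, hs2, one_mul]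
  rw [show s * (u * (s * (u * (u * (u * (s * (u * (u * s)))))))) =
      s * (u * (s * ((u * (u * u)) * (s * (u * (u * s)))))) by simp only [mul_assoc]]
  rw [hu3, one_mul]
  rw [show s * (u * (s * (s * (u * (u * s))))) =
      s * (u * ((s * s) * (u * (u * s)))) by simp only [mul_assoc]
    , hs2, one_mul]
  rw [show s * (u * (u * (u * s))) = s * ((u * (u * u)) * s) by simp only [mul_assoc],
    hu3, one_mul, hs2]

lemma hsq (g : G7) : s * ((g * g) * s) = (s * (g * s)) * (s * (g * s)) := by
  rw [show (s * (g * s)) * (s * (g * s)) = s * (g * ((s * s) * (g * s))) by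
    simp only [mul_assoc], hs2, one_mul, mul_assoc]

lemma z12 : z ^ 12 = 1 := by
  have hsgs : s * ((((s * u) ^ 2 * u)) * s) = (((s * u) ^ 2 * u))⁻¹ :=
    eq_inv_of_mul_eq_one_right hginv
  have h1 : s * (z ^ 6 * s) = z ^ 6 := by
    have c : Commute (z ^ 6) s := czs.pow_left 6
    rw [← mul_assoc, ← c.eq, mul_assoc, hs2, mul_one]
  have h2 : s * (z ^ 6 * s) = (((s * u) ^ 2 * u))⁻¹ * (((s * u) ^ 2 * u))⁻¹ := by
    rw [← hg2, hsq, hsgs]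
  have h3 : z ^ 6 = (((s * u) ^ 2 * u))⁻¹ * (((s * u) ^ 2 * u))⁻¹ := by rw [← h1, h2]
  have h5 : z ^ 6 * z ^ 6 = 1 := by
    have e : z ^ 6 * z ^ 6
        = ((((s * u) ^ 2 * u)) * (((s * u) ^ 2 * u))) *
          ((((s * u) ^ 2 * u))⁻¹ * (((s * u) ^ 2 * u))⁻¹) :=
      congrArg₂ (· * ·) hg2.symm h3
    rw [e]; group
  calc z ^ 12 = z ^ 6 * z ^ 6 := by rw [← pow_add]
    _ = 1 := h5
-- Part 3 : normal forms
def ZP : Fin 4 → G7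
  | 0 => 1
  | 1 => z ^ 3
  | 2 => z ^ 6
  | 3 => z ^ 9

def UP : Fin 3 → G7
  | 0 => 1
  | 1 => u
  | 2 => u ^ 2

def X : Fin 4 → G7
  | 0 => 1
  | 1 => s
  | 2 => s * u
  | 3 => s * u * s

lemma hred (a b : ℕ) (h : a + 12 = b) : z ^ b = z ^ a := by
  subst h; rw [pow_add, z12, mul_one]

lemma cZs : ∀ i : Fin 4, s * ZP i = ZP i * s := by
  intro i
  fin_cases i
  · show s * 1 = 1 * s; rw [mul_one, one_mul]
  · exact ((czs.pow_left 3).eq).symm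
  · exact ((czs.pow_left 6).eq).symm
  · exact ((czs.pow_left 9).eq).symm

lemma cZu : ∀ i : Fin 4, u * ZP i = ZP i * u := by
  intro i
  fin_cases i
  · show u * 1 = 1 * u; rw [mul_one, one_mul]
  · exact ((czu.pow_left 3).eq).symm
  · exact ((czu.pow_left 6).eq).symm
  · exact ((czu.pow_left 9).eq).symm

lemma Sswap (i : Fin 4) (w : G7) : s * (ZP i * w) = ZP i * (s * w) := by
  rw [← mul_assoc, cZs, mul_assoc]

lemma Uswap (i : Fin 4) (w : G7) : u * (ZP i * w) = ZP i * (u * w) := by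
  rw [← mul_assoc, cZu, mul_assoc]

lemma zfold : ∀ i d : Fin 4, ∃ e : Fin 4, ZP i * ZP d = ZP e := by
  intro i d
  fin_cases i
  · fin_cases d
    · exact ⟨0, by show (1:G7) * 1 = 1; rw [mul_one]⟩
    · exact ⟨1, by show (1:G7) * z^3 = z^3; rw [one_mul]⟩
    · exact ⟨2, by show (1:G7) * z^6 = z^6; rw [one_mul]⟩
    · exact ⟨3, by show (1:G7) * z^9 = z^9; rw [one_mul]⟩
  · fin_cases d
    · exact ⟨1, by show z^3 * 1 = z^3; rw [mul_one]⟩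
    · exact ⟨2, by show z^3 * z^3 = z^6; rw [← pow_add]⟩
    · exact ⟨3, by show z^3 * z^6 = z^9; rw [← pow_add]⟩
    · exact ⟨0, by show z^3 * z^9 = 1; rw [← pow_add]; exact z12⟩
  · fin_cases d
    · exact ⟨2, by show z^6 * 1 = z^6; rw [mul_one]⟩
    · exact ⟨3, by show z^6 * z^3 = z^9; rw [← pow_add]⟩
    · exact ⟨0, by show z^6 * z^6 = 1; rw [← pow_add]; exact z12⟩
    · exact ⟨1, by show z^6 * z^9 = z^3; rw [← pow_add]; exact hred 3 15 rfl⟩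
  · fin_cases d
    · exact ⟨3, by show z^9 * 1 = z^9; rw [mul_one]⟩
    · exact ⟨0, by show z^9 * z^3 = 1; rw [← pow_add]; exact z12⟩
    · exact ⟨1, by show z^9 * z^6 = z^3; rw [← pow_add]; exact hred 3 15 rfl⟩
    · exact ⟨2, by show z^9 * z^9 = z^6; rw [← pow_add]; exact hred 6 18 rfl⟩

-- the core rewriting identities
lemma r3 : s * (u * (s * u)) = z ^ 3 * (u ^ 2 * s) := by
  apply mul_left_cancel (a := u)
  have rhs : u * (z ^ 3 * (u ^ 2 * s)) = (u * s) ^ 3 * s := by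
    rw [← mul_assoc, ← (czu.pow_left 3).eq, mul_assoc]
    rw [show u * (u ^ 2 * s) = (u * (u * u)) * s by
      rw [pow_two]; simp only [mul_assoc], hu3, one_mul, ← hK]
  have lhs : u * (s * (u * (s * u))) = (u * s) ^ 3 * s := by
    have h1 : (u * s) ^ 3 * s = (u * s) ^ 2 * (u * (s * s)) := by
      simp only [pow_succ, pow_zero, one_mul, mul_assoc]
    rw [h1, hs2, mul_one]
    simp only [pow_succ, pow_zero, one_mul, mul_assoc]
  rw [lhs, rhs]

lemma r3b : s * (u * (s * u * s)) = z ^ 3 * (u ^ 2 * 1) := by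
  calc s * (u * (s * u * s)) = (s * (u * (s * u))) * s := by simp only [mul_assoc]
    _ = (z ^ 3 * (u ^ 2 * s)) * s := by rw [r3]
    _ = z ^ 3 * (u ^ 2 * (s * s)) := by simp only [mul_assoc]
    _ = z ^ 3 * (u ^ 2 * 1) := by rw [hs2]

lemma r4 : s * u ^ 2 = z ^ 9 * (u * (s * u * s)) := by
  apply mul_left_cancel (a := z ^ 3)
  have hl : z ^ 3 * (s * u ^ 2) = u * (s * (u * s)) := by
    rw [← hK]
    calc (u * s) ^ 3 * (s * u ^ 2)
        = u * (s * (u * (s * (u * ((s * s) * (u * u)))))) := by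
          rw [pow_two]; simp only [pow_succ, pow_zero, one_mul, mul_assoc]
      _ = u * (s * (u * (s * (u * (u * u))))) := by rw [hs2, one_mul]
      _ = u * (s * (u * ((s * 1)))) := by rw [hu3]
      _ = u * (s * (u * s)) := by rw [mul_one]
  have hr : z ^ 3 * (z ^ 9 * (u * (s * u * s))) = u * (s * (u * s)) := by
    rw [← mul_assoc, ← pow_add]
    rw [show z ^ (3 + 9) = z ^ 12 from rfl, z12, one_mul]
    simp only [mul_assoc]
  rw [hl, hr]

lemma r5 : u * (s * u ^ 2) = z ^ 9 * (u ^ 2 * (s * u * s)) := by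
  calc u * (s * u ^ 2) = u * (z ^ 9 * (u * (s * u * s))) := by rw [r4]
    _ = z ^ 9 * (u * (u * (s * u * s))) := by
        rw [← mul_assoc, ← (czu.pow_left 9).eq, mul_assoc]
    _ = z ^ 9 * (u ^ 2 * (s * u * s)) := by rw [pow_two]; simp only [mul_assoc]

lemma r6 : s * (u ^ 2 * (s * u)) = z ^ 6 * (u ^ 2 * (s * u * s)) := by
  calc s * (u ^ 2 * (s * u)) = (s * u ^ 2) * (s * u) := by simp only [mul_assoc]
    _ = (z ^ 9 * (u * (s * u * s))) * (s * u) := by rw [r4]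
    _ = z ^ 9 * (u * (s * (u * ((s * s) * u)))) := by simp only [mul_assoc]
    _ = z ^ 9 * (u * (s * (u * u))) := by rw [hs2, one_mul]
    _ = z ^ 9 * (u * (s * u ^ 2)) := by rw [pow_two]
    _ = z ^ 9 * (z ^ 9 * (u ^ 2 * (s * u * s))) := by rw [r5]
    _ = (z ^ 9 * z ^ 9) * (u ^ 2 * (s * u * s)) := by rw [← mul_assoc]
    _ = z ^ 6 * (u ^ 2 * (s * u * s)) := by rw [← pow_add, hred 6 18 rfl]

lemma r7 : s * (u ^ 2 * (s * u * s)) = z ^ 6 * (u ^ 2 * (s * u)) := by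
  calc s * (u ^ 2 * (s * u * s)) = (s * (u ^ 2 * (s * u))) * s := by simp only [mul_assoc]
    _ = (z ^ 6 * (u ^ 2 * (s * u * s))) * s := by rw [r6]
    _ = z ^ 6 * (u ^ 2 * (s * (u * (s * s)))) := by simp only [mul_assoc]
    _ = z ^ 6 * (u ^ 2 * (s * (u * 1))) := by rw [hs2]
    _ = z ^ 6 * (u ^ 2 * (s * u)) := by rw [mul_one]

lemma baseS : ∀ (j : Fin 3) (k : Fin 4), ∃ (d : Fin 4) (j' : Fin 3) (k' : Fin 4),
    s * (UP j * X k) = ZP d * (UP j' * X k') := by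
  intro j k
  fin_cases j
  · fin_cases k
    · refine ⟨0, 0, 1, ?_⟩
      show s * ((1:G7) * 1) = 1 * ((1:G7) * s)
      simp
    · refine ⟨0, 0, 0, ?_⟩
      show s * ((1:G7) * s) = 1 * ((1:G7) * 1)
      simp [hs2]
    · refine ⟨0, 1, 0, ?_⟩
      show s * (1 * (s * u)) = 1 * (u * 1)
      rw [one_mul, mul_one, one_mul, ← mul_assoc, hs2, one_mul]
    · refine ⟨0, 1, 1, ?_⟩
      show s * (1 * (s * u * s)) = 1 * (u * s)
      rw [one_mul, one_mul, show s * (s * u * s) = (s * s) * (u * s) by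
        simp only [mul_assoc], hs2, one_mul]
  · fin_cases k
    · refine ⟨0, 0, 2, ?_⟩
      show s * (u * 1) = 1 * (1 * (s * u))
      simp
    · refine ⟨0, 0, 3, ?_⟩
      show s * (u * s) = 1 * (1 * (s * u * s))
      simp [mul_assoc]
    · refine ⟨1, 2, 1, ?_⟩
      show s * (u * (s * u)) = z ^ 3 * (u ^ 2 * s)
      exact r3
    · refine ⟨1, 2, 0, ?_⟩
      show s * (u * (s * u * s)) = z ^ 3 * (u ^ 2 * 1)
      exact r3b
  · fin_cases k
    · refine ⟨3, 1, 3, ?_⟩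
      show s * (u ^ 2 * 1) = z ^ 9 * (u * (s * u * s))
      rw [mul_one]; exact r4
    · refine ⟨3, 1, 2, ?_⟩
      show s * (u ^ 2 * s) = z ^ 9 * (u * (s * u))
      calc s * (u ^ 2 * s) = (s * u ^ 2) * s := by simp only [mul_assoc]
        _ = (z ^ 9 * (u * (s * u * s))) * s := by rw [r4]
        _ = z ^ 9 * (u * (s * (u * (s * s)))) := by simp only [mul_assoc]
        _ = z ^ 9 * (u * (s * (u * 1))) := by rw [hs2]
        _ = z ^ 9 * (u * (s * u)) := by rw [mul_one]
    · refine ⟨2, 2, 3, ?_⟩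
      show s * (u ^ 2 * (s * u)) = z ^ 6 * (u ^ 2 * (s * u * s))
      exact r6
    · refine ⟨2, 2, 2, ?_⟩
      show s * (u ^ 2 * (s * u * s)) = z ^ 6 * (u ^ 2 * (s * u))
      exact r7

lemma stepS : ∀ (i : Fin 4) (j : Fin 3) (k : Fin 4),
    ∃ (i' : Fin 4) (j' : Fin 3) (k' : Fin 4),
    s * (ZP i * UP j * X k) = ZP i' * UP j' * X k' := by
  intro i j k
  obtain ⟨d, j', k', hb⟩ := baseS j k
  obtain ⟨e, he⟩ := zfold i d
  refine ⟨e, j', k', ?_⟩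
  calc s * (ZP i * UP j * X k) = s * (ZP i * (UP j * X k)) := by rw [mul_assoc]
    _ = ZP i * (s * (UP j * X k)) := Sswap i _
    _ = ZP i * (ZP d * (UP j' * X k')) := by rw [hb]
    _ = (ZP i * ZP d) * (UP j' * X k') := by rw [mul_assoc]
    _ = ZP e * (UP j' * X k') := by rw [he]
    _ = ZP e * UP j' * X k' := by rw [mul_assoc]

lemma stepU : ∀ (i : Fin 4) (j : Fin 3) (k : Fin 4),
    ∃ (j' : Fin 3), u * (ZP i * UP j * X k) = ZP i * UP j' * X k := by
  intro i j k
  have base : ∀ w : G7, u * (ZP i * w) = ZP i * (u * w) := Uswap i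
  fin_cases j
  · refine ⟨1, ?_⟩
    calc u * (ZP i * (1:G7) * X k) = u * (ZP i * ((1:G7) * X k)) := by rw [mul_assoc]
      _ = ZP i * (u * (1 * X k)) := base _
      _ = ZP i * (u * X k) := by rw [one_mul]
      _ = ZP i * u * X k := by rw [mul_assoc]
  · refine ⟨2, ?_⟩
    calc u * (ZP i * u * X k) = u * (ZP i * (u * X k)) := by rw [mul_assoc]
      _ = ZP i * (u * (u * X k)) := base _
      _ = ZP i * (u ^ 2 * X k) := by rw [pow_two]; simp only [mul_assoc]
      _ = ZP i * u ^ 2 * X k := by rw [mul_assoc]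
  · refine ⟨0, ?_⟩
    calc u * (ZP i * u ^ 2 * X k) = u * (ZP i * (u ^ 2 * X k)) := by rw [mul_assoc]
      _ = ZP i * (u * (u ^ 2 * X k)) := base _
      _ = ZP i * ((u * (u * u)) * X k) := by rw [pow_two]; simp only [mul_assoc]
      _ = ZP i * ((1:G7) * X k) := by rw [hu3]
      _ = ZP i * (1:G7) * X k := by rw [mul_assoc]
-- Part 4 : concrete matrix model
abbrev M : Type := Matrix (Fin 2) (Fin 2) (ZMod 13)

def sA : M := !![12, 0; 0, 1]
def tA : M := !![6, 6; 9, 4]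
def uA : M := !![2, 3; 2, 10]
def zA : M := !![2, 0; 0, 2]

def sU : Mˣ := ⟨sA, sA, by decide, by decide⟩
def tU : Mˣ := ⟨tA, tA * tA, by decide, by decide⟩
def uU : Mˣ := ⟨uA, uA * uA, by decide, by decide⟩

def fgen : Fin 3 → Mˣ
  | 0 => sU
  | 1 => tU
  | 2 => uU

lemma frels : ∀ r ∈ rels, FreeGroup.lift fgen r = 1 := by
  intro r hr
  rcases hr with rfl | rfl | rfl | rfl | rfl
  · rw [map_pow, FreeGroup.lift_apply_of]
    refine Units.ext ?_
    rw [Units.val_pow_eq_pow_val]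
    decide
  · rw [map_pow, FreeGroup.lift_apply_of]
    refine Units.ext ?_
    rw [Units.val_pow_eq_pow_val]
    decide
  · rw [map_pow, FreeGroup.lift_apply_of]
    refine Units.ext ?_
    rw [Units.val_pow_eq_pow_val]
    decide
  · simp only [map_mul, map_inv, FreeGroup.lift_apply_of]
    refine mul_inv_eq_one.mpr (Units.ext ?_)
    show (sU.val * tU.val * uU.val : M) = tU.val * uU.val * sU.val
    decide
  · simp only [map_mul, map_inv, FreeGroup.lift_apply_of]
    refine mul_inv_eq_one.mpr (Units.ext ?_)
    show (sU.val * tU.val * uU.val : M) = uU.val * sU.val * tU.val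
    decide

def φ : G7 →* Mˣ := PresentedGroup.toGroup frels

lemma φs : φ s = sU := PresentedGroup.toGroup.of frels
lemma φt : φ t = tU := PresentedGroup.toGroup.of frels
lemma φu : φ u = uU := PresentedGroup.toGroup.of frels

lemma φzval : (φ z : M) = zA := by
  rw [z, map_mul, map_mul, φs, φt, φu]
  show (sU.val * tU.val * uU.val : M) = zA
  decide

def xA : Fin 4 → M
  | 0 => 1
  | 1 => sA
  | 2 => sA * uA
  | 3 => sA * uA * sA

def F : Fin 4 × Fin 3 × Fin 4 → M :=
  fun p => zA ^ (3 * (p.1 : ℕ)) * uA ^ ((p.2.1 : ℕ)) * xA p.2.2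

set_option maxHeartbeats 2000000 in
set_option maxRecDepth 20000 in
lemma hFinj : Function.Injective F := by decide

lemma φX : ∀ k : Fin 4, (φ (X k) : M) = xA k := by
  intro k
  fin_cases k
  · show (φ (1 : G7) : M) = 1
    rw [map_one, Units.val_one]
  · show (φ s : M) = sA
    rw [φs]; rfl
  · show (φ (s * u) : M) = sA * uA
    rw [map_mul, φs, φu]; rfl
  · show (φ (s * u * s) : M) = sA * uA * sA
    rw [map_mul, map_mul, φs, φu]; rfl

lemma φZP : ∀ i : Fin 4, (φ (ZP i) : M) = zA ^ (3 * (i : ℕ)) := by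
  intro i
  fin_cases i
  · show (φ (1 : G7) : M) = zA ^ (3 * ((0 : Fin 4) : ℕ))
    rw [map_one, Units.val_one]; decide
  · show (φ (z ^ 3) : M) = zA ^ (3 * ((1 : Fin 4) : ℕ))
    rw [map_pow, Units.val_pow_eq_pow_val, φzval]; decide
  · show (φ (z ^ 6) : M) = zA ^ (3 * ((2 : Fin 4) : ℕ))
    rw [map_pow, Units.val_pow_eq_pow_val, φzval]; decide
  · show (φ (z ^ 9) : M) = zA ^ (3 * ((3 : Fin 4) : ℕ))
    rw [map_pow, Units.val_pow_eq_pow_val, φzval]; decide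

lemma φUP : ∀ j : Fin 3, (φ (UP j) : M) = uA ^ ((j : ℕ)) := by
  intro j
  fin_cases j
  · show (φ (1 : G7) : M) = uA ^ ((0 : Fin 3) : ℕ)
    rw [map_one, Units.val_one]; decide
  · show (φ u : M) = uA ^ ((1 : Fin 3) : ℕ)
    rw [φu]; decide
  · show (φ (u ^ 2) : M) = uA ^ ((2 : Fin 3) : ℕ)
    rw [map_pow, Units.val_pow_eq_pow_val, φu]; decide

lemma φN (i : Fin 4) (j : Fin 3) (k : Fin 4) :
    (φ (ZP i * UP j * X k) : M) = F (i, j, k) := by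
  rw [map_mul, map_mul, Units.val_mul, Units.val_mul, φZP, φUP, φX]
  rfl
-- Part 5 : assembly
lemma decompZ {a : G7} (h : a ∈ ({1, z ^ 3, z ^ 6, z ^ 9} : Set G7)) :
    ∃ i : Fin 4, a = ZP i := by
  simp only [Set.mem_insert_iff, Set.mem_singleton_iff] at h
  rcases h with rfl | rfl | rfl | rfl
  exacts [⟨0, rfl⟩, ⟨1, rfl⟩, ⟨2, rfl⟩, ⟨3, rfl⟩]

lemma decompU {b : G7} (h : b ∈ ({1, u, u ^ 2} : Set G7)) :
    ∃ j : Fin 3, b = UP j := by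
  simp only [Set.mem_insert_iff, Set.mem_singleton_iff] at h
  rcases h with rfl | rfl | rfl
  exacts [⟨0, rfl⟩, ⟨1, rfl⟩, ⟨2, rfl⟩]

lemma decompX {c : G7} (h : c ∈ ({1, s, s * u, s * u * s} : Set G7)) :
    ∃ k : Fin 4, c = X k := by
  simp only [Set.mem_insert_iff, Set.mem_singleton_iff] at h
  rcases h with rfl | rfl | rfl | rfl
  exacts [⟨0, rfl⟩, ⟨1, rfl⟩, ⟨2, rfl⟩, ⟨3, rfl⟩]

lemma memZP : ∀ i : Fin 4, ZP i ∈ ({1, z ^ 3, z ^ 6, z ^ 9} : Set G7) := by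
  intro i
  fin_cases i
  · exact Set.mem_insert _ _
  · exact Set.mem_insert_of_mem _ (Set.mem_insert _ _)
  · exact Set.mem_insert_of_mem _ (Set.mem_insert_of_mem _ (Set.mem_insert _ _))
  · exact Set.mem_insert_of_mem _ (Set.mem_insert_of_mem _ (Set.mem_insert_of_mem _ rfl))

lemma memUP : ∀ j : Fin 3, UP j ∈ ({1, u, u ^ 2} : Set G7) := by
  intro j
  fin_cases j
  · exact Set.mem_insert _ _
  · exact Set.mem_insert_of_mem _ (Set.mem_insert _ _)
  · exact Set.mem_insert_of_mem _ (Set.mem_insert_of_mem _ rfl)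

lemma memX : ∀ k : Fin 4, X k ∈ ({1, s, s * u, s * u * s} : Set G7) := by
  intro k
  fin_cases k
  · exact Set.mem_insert _ _
  · exact Set.mem_insert_of_mem _ (Set.mem_insert _ _)
  · exact Set.mem_insert_of_mem _ (Set.mem_insert_of_mem _ (Set.mem_insert _ _))
  · exact Set.mem_insert_of_mem _ (Set.mem_insert_of_mem _ (Set.mem_insert_of_mem _ rfl))

lemma memN (i : Fin 4) (j : Fin 3) (k : Fin 4) :
    ZP i * UP j * X k ∈ (fun p : G7 × G7 × G7 => p.1 * p.2.1 * p.2.2) ''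
      (({1, z ^ 3, z ^ 6, z ^ 9} : Set G7) ×ˢ
        (({1, u, u ^ 2} : Set G7) ×ˢ ({1, s, s * u, s * u * s} : Set G7))) :=
  ⟨(ZP i, UP j, X k), ⟨memZP i, memUP j, memX k⟩, rfl⟩

theorem statement2 :
    Set.BijOn (fun p : G7 × G7 × G7 => p.1 * p.2.1 * p.2.2)
      (({1, z ^ 3, z ^ 6, z ^ 9} : Set G7) ×ˢ (({1, u, u ^ 2} : Set G7) ×ˢ ({1, s, s * u, s * u * s} : Set G7)))
      (G6 : Set G7) := by
  have hsG : s ∈ G6 := Subgroup.subset_closure (Set.mem_insert _ _)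
  have huG : u ∈ G6 := Subgroup.subset_closure (Set.mem_insert_of_mem _ rfl)
  have hzG : z ^ 3 ∈ G6 := by
    rw [← hK]; exact pow_mem (mul_mem huG hsG) 3
  refine ⟨?_, ?_, ?_⟩
  · -- MapsTo
    rintro ⟨a, b, c⟩ ⟨ha, hb, hc⟩
    obtain ⟨i, rfl⟩ := decompZ ha
    obtain ⟨j, rfl⟩ := decompU hb
    obtain ⟨k, rfl⟩ := decompX hc
    have h1 : ZP i ∈ G6 := by
      fin_cases i
      · exact one_mem _
      · exact hzG
      · show z ^ 6 ∈ G6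
        rw [show (6 : ℕ) = 3 * 2 from rfl, pow_mul]; exact pow_mem hzG 2
      · show z ^ 9 ∈ G6
        rw [show (9 : ℕ) = 3 * 3 from rfl, pow_mul]; exact pow_mem hzG 3
    have h2 : UP j ∈ G6 := by
      fin_cases j
      · exact one_mem _
      · exact huG
      · exact pow_mem huG 2
    have h3 : X k ∈ G6 := by
      fin_cases k
      · exact one_mem _
      · exact hsG
      · exact mul_mem hsG huG
      · exact mul_mem (mul_mem hsG huG) hsG
    exact mul_mem (mul_mem h1 h2) h3
  · -- InjOn
    rintro ⟨a, b, c⟩ ⟨ha, hb, hc⟩ ⟨a', b', c'⟩ ⟨ha', hb', hc'⟩ h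
    obtain ⟨i, rfl⟩ := decompZ ha
    obtain ⟨j, rfl⟩ := decompU hb
    obtain ⟨k, rfl⟩ := decompX hc
    obtain ⟨i', rfl⟩ := decompZ ha'
    obtain ⟨j', rfl⟩ := decompU hb'
    obtain ⟨k', rfl⟩ := decompX hc'
    have h2 : F (i, j, k) = F (i', j', k') := by
      have h1 := congrArg (fun w : G7 => ((φ w : Mˣ) : M)) h
      simp only at h1
      rwa [φN, φN] at h1
    have h3 := hFinj h2
    obtain ⟨rfl, rfl, rfl⟩ : i = i' ∧ j = j' ∧ k = k' := by
      simpa [Prod.ext_iff] using h3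
    rfl
  · -- SurjOn
    intro g hg
    have hg' : g ∈ Subgroup.closure {s, u} := hg
    have hmem_s : ∀ y, y ∈ (fun p : G7 × G7 × G7 => p.1 * p.2.1 * p.2.2) ''
        (({1, z ^ 3, z ^ 6, z ^ 9} : Set G7) ×ˢ
          (({1, u, u ^ 2} : Set G7) ×ˢ ({1, s, s * u, s * u * s} : Set G7))) →
        s * y ∈ (fun p : G7 × G7 × G7 => p.1 * p.2.1 * p.2.2) ''
        (({1, z ^ 3, z ^ 6, z ^ 9} : Set G7) ×ˢ
          (({1, u, u ^ 2} : Set G7) ×ˢ ({1, s, s * u, s * u * s} : Set G7))) := by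
      rintro y ⟨⟨a, b, c⟩, ⟨ha, hb, hc⟩, rfl⟩
      obtain ⟨i, rfl⟩ := decompZ ha
      obtain ⟨j, rfl⟩ := decompU hb
      obtain ⟨k, rfl⟩ := decompX hc
      obtain ⟨i', j', k', he⟩ := stepS i j k
      rw [show (fun p : G7 × G7 × G7 => p.1 * p.2.1 * p.2.2) (ZP i, UP j, X k)
          = ZP i * UP j * X k from rfl, he]
      exact memN i' j' k'
    have hmem_u : ∀ y, y ∈ (fun p : G7 × G7 × G7 => p.1 * p.2.1 * p.2.2) ''
        (({1, z ^ 3, z ^ 6, z ^ 9} : Set G7) ×ˢ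
          (({1, u, u ^ 2} : Set G7) ×ˢ ({1, s, s * u, s * u * s} : Set G7))) →
        u * y ∈ (fun p : G7 × G7 × G7 => p.1 * p.2.1 * p.2.2) ''
        (({1, z ^ 3, z ^ 6, z ^ 9} : Set G7) ×ˢ
          (({1, u, u ^ 2} : Set G7) ×ˢ ({1, s, s * u, s * u * s} : Set G7))) := by
      rintro y ⟨⟨a, b, c⟩, ⟨ha, hb, hc⟩, rfl⟩
      obtain ⟨i, rfl⟩ := decompZ ha
      obtain ⟨j, rfl⟩ := decompU hb
      obtain ⟨k, rfl⟩ := decompX hc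
      obtain ⟨j', he⟩ := stepU i j k
      rw [show (fun p : G7 × G7 × G7 => p.1 * p.2.1 * p.2.2) (ZP i, UP j, X k)
          = ZP i * UP j * X k from rfl, he]
      exact memN i j' k
    refine Subgroup.closure_induction_left (p := fun x _ => x ∈ _) ?_ ?_ ?_ hg'
    · exact ⟨(1, 1, 1), ⟨Set.mem_insert _ _, Set.mem_insert _ _, Set.mem_insert _ _⟩,
        by simp⟩
    · intro x hx y hy hmem
      simp only [Set.mem_insert_iff, Set.mem_singleton_iff] at hx
      rcases hx with rfl | rfl
      · exact hmem_s y hmem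
      · exact hmem_u y hmem
    · intro x hx y hy hmem
      simp only [Set.mem_insert_iff, Set.mem_singleton_iff] at hx
      rcases hx with rfl | rfl
      · rw [show s⁻¹ = s from inv_eq_of_mul_eq_one_left hs2]
        exact hmem_s y hmem
      · rw [show u⁻¹ = u * u from inv_eq_of_mul_eq_one_right hu3]
        have h2 := hmem_u _ (hmem_u _ hmem)
        rwa [← mul_assoc] at h2
end Tetra
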